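/- Let A₀ and B₀ be Hermitian 2×2 complex matrices satisfying trace(A₀) = 0, trace(B₀) = 0, trace(A₀·B₀) = 0, and A₀ ≠ 0. Then there exist a unitary 2×2 matrix U and real numbers α > 0 and β ≥ 0 such that U·A₀·U* = α·σ and U·B₀·U* = β·τ, where σ = [[1,0],[0,-1]] and τ = [[0,1],[1,0]] are the Pauli matrices. -/

import Mathlib

open Matrix

noncomputable def pauliσ : Matrix (Fin 2) (Fin 2) ℂ := !![1, 0; 0, -1]

noncomputable def pauliτ : Matrix (Fin 2) (Fin 2) ℂ := !![0, 1; 1, 0]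

lemma phase_step (B : Matrix (Fin 2) (Fin 2) ℂ) (b : ℂ)
    (hB : B = !![0, b; (starRingEnd ℂ) b, 0]) :
    ∃ (D : Matrix (Fin 2) (Fin 2) ℂ) (β : ℝ), D * Dᴴ = 1 ∧ 0 ≤ β ∧
      D * pauliσ * Dᴴ = pauliσ ∧ D * B * Dᴴ = (β : ℂ) • pauliτ := by
  classical
  set w : ℂ := if b = 0 then 1 else (starRingEnd ℂ) b / ((‖b‖ : ℝ) : ℂ) with hw_def
  have hwb : w * b = ((‖b‖ : ℝ) : ℂ) := by
    by_cases hb : b = 0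
    · simp [hw_def, hb]
    · have hab : ((‖b‖ : ℝ) : ℂ) ≠ 0 := by
        simpa using (norm_ne_zero_iff.mpr hb)
      rw [hw_def, if_neg hb, div_mul_eq_mul_div, Complex.conj_mul', div_eq_iff hab]
      ring
  have hw1 : w * (starRingEnd ℂ) w = 1 := by
    by_cases hb : b = 0
    · simp [hw_def, hb]
    · have hab : ((‖b‖ : ℝ) : ℂ) ≠ 0 := by
        simpa using (norm_ne_zero_iff.mpr hb)
      simp only [hw_def, if_neg hb]
      rw [map_div₀]
      simp only [Complex.conj_conj, Complex.conj_ofReal]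
      field_simp
      rw [mul_comm, Complex.mul_conj, Complex.normSq_eq_norm_sq]
      push_cast
      ring
  have hwb' : (starRingEnd ℂ) b * (starRingEnd ℂ) w = ((‖b‖ : ℝ) : ℂ) := by
    have := congrArg (starRingEnd ℂ) hwb
    simpa [mul_comm, Complex.conj_ofReal] using this
  refine ⟨!![w, 0; 0, 1], ‖b‖, ?_, norm_nonneg b, ?_, ?_⟩
  · ext i j
    fin_cases i <;> fin_cases j <;>
      simp [Matrix.mul_apply, Fin.sum_univ_two, Matrix.conjTranspose_apply, hw1, Matrix.one_apply]
  · ext i j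
    fin_cases i <;> fin_cases j <;>
      simp [pauliσ, Matrix.mul_apply, Fin.sum_univ_two, Matrix.conjTranspose_apply, hw1]
  · ext i j
    fin_cases i <;> fin_cases j <;>
      simp [pauliτ, hB, Matrix.mul_apply, Fin.sum_univ_two, Matrix.conjTranspose_apply,
        hwb, hwb']

lemma tau_mul_diag_mul_tau (d : Fin 2 → ℂ) :
    pauliτ * Matrix.diagonal d * pauliτ = Matrix.diagonal ![d 1, d 0] := by
  ext i j
  fin_cases i <;> fin_cases j <;>
    simp [pauliτ, Matrix.mul_apply, Fin.sum_univ_two, Matrix.diagonal_apply,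
      Matrix.vecMul, dotProduct, Matrix.vecHead, Matrix.vecTail]

lemma trace_sigma_mul (M : Matrix (Fin 2) (Fin 2) ℂ) :
    (pauliσ * M).trace = M 0 0 - M 1 1 := by
  simp [pauliσ, Matrix.trace, Matrix.mul_apply, Fin.sum_univ_two, Matrix.vecMul,
    dotProduct, Matrix.vecHead, Matrix.vecTail]
  ring

lemma diag_step (A : Matrix (Fin 2) (Fin 2) ℂ) (hA : A.IsHermitian)
    (htrA : A.trace = 0) (hA0 : A ≠ 0) :
    ∃ (W : Matrix (Fin 2) (Fin 2) ℂ) (α : ℝ), W * Wᴴ = 1 ∧ 0 < α ∧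
      W * A * Wᴴ = (α : ℂ) • pauliσ := by
  classical
  set V : Matrix (Fin 2) (Fin 2) ℂ := (hA.eigenvectorUnitary : Matrix (Fin 2) (Fin 2) ℂ) with hV
  have hmem := hA.eigenvectorUnitary.2
  have hsVV : star V * V = 1 := Matrix.mem_unitaryGroup_iff'.mp hmem
  have hVsV : V * star V = 1 := Matrix.mem_unitaryGroup_iff.mp hmem
  set e : Fin 2 → ℝ := hA.eigenvalues with he
  have hd : star V * A * V = Matrix.diagonal (fun i => (e i : ℂ)) := by
    have := hA.spectral_theorem
    rw [Unitary.conjStarAlgAut_apply] at this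
    rw [this]
    change star V * (V * Matrix.diagonal (fun i => (e i : ℂ)) * star V) * V = _
    rw [show star V * (V * Matrix.diagonal (fun i => (e i : ℂ)) * star V) * V
      = (star V * V) * Matrix.diagonal (fun i => (e i : ℂ)) * (star V * V) by
        simp only [Matrix.mul_assoc], hsVV, one_mul, mul_one]
  have hspec : A = V * Matrix.diagonal (fun i => (e i : ℂ)) * star V := by
    have := hA.spectral_theorem
    rw [Unitary.conjStarAlgAut_apply] at this
    exact this
  have htr : (e 0 : ℂ) + e 1 = 0 := by
    have h1 : A.trace = (Matrix.diagonal (fun i => (e i : ℂ))).trace := by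
      rw [hspec, Matrix.trace_mul_cycle, hsVV, one_mul]
    rw [htrA] at h1
    have h2 : (Matrix.diagonal (fun i => (e i : ℂ))).trace = (e 0 : ℂ) + e 1 := by
      simp [Matrix.trace, Fin.sum_univ_two]
    rw [h2] at h1
    exact h1.symm
  have htrR : e 0 + e 1 = 0 := by exact_mod_cast htr
  have he0 : e 0 ≠ 0 := by
    intro h0
    have h1 : e 1 = 0 := by linarith
    apply hA0
    have : Matrix.diagonal (fun i => (e i : ℂ)) = 0 := by
      ext i j
      fin_cases i <;> fin_cases j <;> simp [Matrix.diagonal, h0, h1]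
    rw [hspec, this, mul_zero, zero_mul]
  have he1 : e 1 = -e 0 := by linarith
  rcases lt_or_gt_of_ne he0 with hneg | hpos
  · -- e 0 < 0, use τ * star V
    refine ⟨pauliτ * star V, -e 0, ?_, by linarith, ?_⟩
    · have hτ : pauliτ * pauliτᴴ = 1 := by
        ext i j
        fin_cases i <;> fin_cases j <;>
          simp [pauliτ, Matrix.mul_apply, Fin.sum_univ_two, Matrix.conjTranspose_apply,
            Matrix.one_apply]
      calc pauliτ * star V * (pauliτ * star V)ᴴ
          = pauliτ * (star V * V) * pauliτᴴ := by
            simp [Matrix.conjTranspose_mul, Matrix.star_eq_conjTranspose, mul_assoc]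
        _ = 1 := by rw [hsVV]; simpa using hτ
    · have hτh : pauliτᴴ = pauliτ := by
        ext i j
        fin_cases i <;> fin_cases j <;> simp [pauliτ, Matrix.conjTranspose_apply]
      have : pauliτ * star V * A * (pauliτ * star V)ᴴ
          = pauliτ * (star V * A * V) * pauliτ := by
        simp [Matrix.conjTranspose_mul, hτh, Matrix.star_eq_conjTranspose, mul_assoc]
      rw [this, hd, tau_mul_diag_mul_tau]
      ext i j
      fin_cases i <;> fin_cases j <;>
        simp [pauliσ, Matrix.diagonal, he1] <;> push_cast <;> ring
  · refine ⟨star V, e 0, ?_, hpos, ?_⟩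
    · simpa [Matrix.star_eq_conjTranspose] using hsVV
    · have : star V * A * (star V)ᴴ = star V * A * V := by
        simp [Matrix.star_eq_conjTranspose]
      rw [this, hd]
      ext i j
      fin_cases i <;> fin_cases j <;>
        simp [pauliσ, Matrix.diagonal, he1] <;> push_cast <;> ring

theorem stmt5 (A₀ B₀ : Matrix (Fin 2) (Fin 2) ℂ)
    (hA : A₀.IsHermitian) (hB : B₀.IsHermitian)
    (htrA : A₀.trace = 0) (htrB : B₀.trace = 0) (htrAB : (A₀ * B₀).trace = 0)
    (hA0 : A₀ ≠ 0) :
    ∃ (U : Matrix (Fin 2) (Fin 2) ℂ) (α β : ℝ),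
      U * Uᴴ = 1 ∧ 0 < α ∧ 0 ≤ β ∧
      U * A₀ * Uᴴ = (α : ℂ) • pauliσ ∧ U * B₀ * Uᴴ = (β : ℂ) • pauliτ := by
  classical
  obtain ⟨W, α, hWW, hα, hWA⟩ := diag_step A₀ hA htrA hA0
  have hWW' : Wᴴ * W = 1 := mul_eq_one_comm.mp hWW
  set B₂ : Matrix (Fin 2) (Fin 2) ℂ := W * B₀ * Wᴴ with hB₂
  have hB₂herm : B₂ᴴ = B₂ := by
    simp [hB₂, Matrix.conjTranspose_mul, hB.eq, mul_assoc]
  have htrB₂ : B₂.trace = 0 := by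
    rw [hB₂, Matrix.trace_mul_cycle, hWW', one_mul, htrB]
  have htrAB₂ : (((α : ℂ) • pauliσ) * B₂).trace = 0 := by
    rw [← hWA, hB₂]
    have hmm : W * A₀ * Wᴴ * (W * B₀ * Wᴴ) = W * (A₀ * B₀) * Wᴴ := by
      have h1 : W * A₀ * Wᴴ * (W * B₀ * Wᴴ) = W * A₀ * (Wᴴ * W) * (B₀ * Wᴴ) := by
        noncomm_ring
      rw [h1, hWW', mul_one]
      noncomm_ring
    rw [hmm, Matrix.trace_mul_cycle, hWW', one_mul, htrAB]
  have htrσB₂ : (pauliσ * B₂).trace = 0 := by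
    have hα0 : (α : ℂ) ≠ 0 := by exact_mod_cast ne_of_gt hα
    have := htrAB₂
    rw [Matrix.smul_mul, Matrix.trace_smul] at this
    exact (smul_eq_zero.mp this).resolve_left hα0
  have hσtr : (pauliσ * B₂).trace = B₂ 0 0 - B₂ 1 1 := trace_sigma_mul B₂
  have htrB₂' : B₂.trace = B₂ 0 0 + B₂ 1 1 := by
    simp [Matrix.trace, Fin.sum_univ_two]
  have h00 : B₂ 0 0 = 0 := by
    have h1 := htrσB₂; rw [hσtr] at h1
    have h2 := htrB₂; rw [htrB₂'] at h2
    linear_combination (h1 + h2) / 2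
  have h11 : B₂ 1 1 = 0 := by
    have h1 := htrσB₂; rw [hσtr] at h1
    have h2 := htrB₂; rw [htrB₂'] at h2
    linear_combination (h2 - h1) / 2
  have h10 : B₂ 1 0 = (starRingEnd ℂ) (B₂ 0 1) := by
    have := congrFun (congrFun hB₂herm 1) 0
    simpa [Matrix.conjTranspose_apply] using this.symm
  have hBform : B₂ = !![0, B₂ 0 1; (starRingEnd ℂ) (B₂ 0 1), 0] := by
    ext i j
    fin_cases i <;> fin_cases j <;> simp [h00, h11, h10]
  obtain ⟨D, β, hDD, hβ, hDσ, hDB⟩ := phase_step B₂ (B₂ 0 1) hBform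
  have step1 : D * W * (D * W)ᴴ = D * (W * Wᴴ) * Dᴴ := by
    rw [Matrix.conjTranspose_mul]
    simp only [Matrix.mul_assoc]
  have step2 : D * W * A₀ * (D * W)ᴴ = D * (W * A₀ * Wᴴ) * Dᴴ := by
    rw [Matrix.conjTranspose_mul]
    simp only [Matrix.mul_assoc]
  have step3 : D * W * B₀ * (D * W)ᴴ = D * (W * B₀ * Wᴴ) * Dᴴ := by
    rw [Matrix.conjTranspose_mul]
    simp only [Matrix.mul_assoc]
  refine ⟨D * W, α, β, ?_, hα, hβ, ?_, ?_⟩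
  · rw [step1, hWW, mul_one, hDD]
  · rw [step2, hWA]
    rw [show D * ((α : ℂ) • pauliσ) * Dᴴ = (α : ℂ) • (D * pauliσ * Dᴴ) by
      simp [Matrix.mul_smul, Matrix.smul_mul], hDσ]
  · rw [step3, ← hB₂, hDB]
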